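/- Let p_i, p_j, p_k be pairwise distinct, non-collinear points in ℝ³ satisfying the angle constraints (C1)–(C3) with all six parameters w_ik, w_ki, w_ij, w_ji, w_jk, w_kj nonzero. Then exactly one of the following four sign patterns holds: (a) w_ki·w_ik < 0, w_ji·w_ij < 0, and w_kj·w_jk < 0; (b) w_ki·w_ik > 0, w_ji·w_ij > 0, and w_kj·w_jk < 0; (c) w_ki·w_ik > 0, w_kj·w_jk > 0, and w_ji·w_ij < 0; (d) w_ji·w_ij > 0, w_kj·w_jk > 0, and w_ki·w_ik < 0. -/

import Mathlib

open EuclideanGeometry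

set_option maxHeartbeats 800000

private lemma aux_neg_left {x y : ℝ} (h : x * y < 0) (hy : 0 < y) : x < 0 := by
  by_contra hx
  push_neg at hx
  exact absurd (mul_nonneg hx hy.le) (not_le.mpr h)

private lemma aux_pos_left {x y : ℝ} (h : x * y < 0) (hy : y < 0) : 0 < x := by
  nlinarith

theorem stmt_11 (p_i p_j p_k : EuclideanSpace ℝ (Fin 3))
    (hij : p_i ≠ p_j) (hik : p_i ≠ p_k) (hjk : p_j ≠ p_k)
    (hncol : ¬ Collinear ℝ ({p_i, p_j, p_k} : Set (EuclideanSpace ℝ (Fin 3))))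
    (w_ik w_ki w_ij w_ji w_jk w_kj : ℝ)
    (hC1 : w_ik * dist p_i p_k * dist p_i p_j * Real.cos (∠ p_j p_i p_k)
          + w_ki * dist p_i p_k * dist p_j p_k * Real.cos (∠ p_i p_k p_j) = 0)
    (hC2 : w_ij * dist p_i p_k * dist p_i p_j * Real.cos (∠ p_j p_i p_k)
          + w_ji * dist p_i p_j * dist p_j p_k * Real.cos (∠ p_i p_j p_k) = 0)
    (hC3 : w_jk * dist p_j p_k * dist p_i p_j * Real.cos (∠ p_i p_j p_k)
          + w_kj * dist p_i p_k * dist p_j p_k * Real.cos (∠ p_i p_k p_j) = 0)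
    (h1 : w_ik ≠ 0) (h2 : w_ki ≠ 0) (h3 : w_ij ≠ 0) (h4 : w_ji ≠ 0)
    (h5 : w_jk ≠ 0) (h6 : w_kj ≠ 0) :
    ((w_ki * w_ik < 0 ∧ w_ji * w_ij < 0 ∧ w_kj * w_jk < 0) ∧
        ¬ (w_ki * w_ik > 0 ∧ w_ji * w_ij > 0 ∧ w_kj * w_jk < 0) ∧
        ¬ (w_ki * w_ik > 0 ∧ w_kj * w_jk > 0 ∧ w_ji * w_ij < 0) ∧
        ¬ (w_ji * w_ij > 0 ∧ w_kj * w_jk > 0 ∧ w_ki * w_ik < 0)) ∨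
      (¬ (w_ki * w_ik < 0 ∧ w_ji * w_ij < 0 ∧ w_kj * w_jk < 0) ∧
        (w_ki * w_ik > 0 ∧ w_ji * w_ij > 0 ∧ w_kj * w_jk < 0) ∧
        ¬ (w_ki * w_ik > 0 ∧ w_kj * w_jk > 0 ∧ w_ji * w_ij < 0) ∧
        ¬ (w_ji * w_ij > 0 ∧ w_kj * w_jk > 0 ∧ w_ki * w_ik < 0)) ∨
      (¬ (w_ki * w_ik < 0 ∧ w_ji * w_ij < 0 ∧ w_kj * w_jk < 0) ∧
        ¬ (w_ki * w_ik > 0 ∧ w_ji * w_ij > 0 ∧ w_kj * w_jk < 0) ∧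
        (w_ki * w_ik > 0 ∧ w_kj * w_jk > 0 ∧ w_ji * w_ij < 0) ∧
        ¬ (w_ji * w_ij > 0 ∧ w_kj * w_jk > 0 ∧ w_ki * w_ik < 0)) ∨
      (¬ (w_ki * w_ik < 0 ∧ w_ji * w_ij < 0 ∧ w_kj * w_jk < 0) ∧
        ¬ (w_ki * w_ik > 0 ∧ w_ji * w_ij > 0 ∧ w_kj * w_jk < 0) ∧
        ¬ (w_ki * w_ik > 0 ∧ w_kj * w_jk > 0 ∧ w_ji * w_ij < 0) ∧
        (w_ji * w_ij > 0 ∧ w_kj * w_jk > 0 ∧ w_ki * w_ik < 0)) := by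
  set A := ∠ p_j p_i p_k with hA
  set B := ∠ p_i p_j p_k with hB
  set C := ∠ p_i p_k p_j with hC
  set a := Real.cos A with ha
  set b := Real.cos B with hb
  set c := Real.cos C with hc
  have dij : (0:ℝ) < dist p_i p_j := dist_pos.mpr hij
  have dik : (0:ℝ) < dist p_i p_k := dist_pos.mpr hik
  have djk : (0:ℝ) < dist p_j p_k := dist_pos.mpr hjk
  have hsum : A + C + B = Real.pi := by
    have := EuclideanGeometry.angle_add_angle_add_angle_eq_pi
      (p₁ := p_j) (p₂ := p_i) (p₃ := p_k) hij
    rwa [EuclideanGeometry.angle_comm p_k p_j p_i] at this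
  have hA0 : 0 ≤ A := EuclideanGeometry.angle_nonneg _ _ _
  have hB0 : 0 ≤ B := EuclideanGeometry.angle_nonneg _ _ _
  have hC0 : 0 ≤ C := EuclideanGeometry.angle_nonneg _ _ _
  have hApi : A ≤ Real.pi := EuclideanGeometry.angle_le_pi _ _ _
  have hBpi : B ≤ Real.pi := EuclideanGeometry.angle_le_pi _ _ _
  have hCpi : C ≤ Real.pi := EuclideanGeometry.angle_le_pi _ _ _
  have hzero : ∀ X : ℝ, Real.cos X = 0 → 0 ≤ X → X ≤ Real.pi → X = Real.pi / 2 := by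
    intro X hX h0 hp
    refine Real.injOn_cos ⟨h0, hp⟩ ⟨by positivity, by linarith [Real.pi_pos]⟩ ?_
    simp [Real.cos_pi_div_two, hX]
  have hBne : B ≠ 0 := by
    intro hB0'
    exact hncol (EuclideanGeometry.collinear_of_angle_eq_zero (hB ▸ hB0'))
  -- none of a, b, c is zero
  have hazc : a = 0 → c = 0 := by
    intro h0
    have h' := hC1
    rw [h0] at h'
    have h'' : w_ki * (dist p_i p_k * (dist p_j p_k * c)) = 0 := by linarith [h', mul_eq_zero_of_right (w_ik * dist p_i p_k * dist p_i p_j) (rfl : (0:ℝ) = 0)]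
    rcases mul_eq_zero.mp h'' with h | h
    · exact absurd h h2
    rcases mul_eq_zero.mp h with h | h
    · linarith
    rcases mul_eq_zero.mp h with h | h
    · linarith
    · exact h
  have hcza : c = 0 → a = 0 := by
    intro h0
    have h' := hC1
    rw [h0] at h'
    have h'' : w_ik * (dist p_i p_k * (dist p_i p_j * a)) = 0 := by linarith
    rcases mul_eq_zero.mp h'' with h | h
    · exact absurd h h1
    rcases mul_eq_zero.mp h with h | h
    · linarith
    rcases mul_eq_zero.mp h with h | h
    · linarith
    · exact h
  have hbza : b = 0 → a = 0 := by
    intro h0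
    have h' := hC2
    rw [h0] at h'
    have h'' : w_ij * (dist p_i p_k * (dist p_i p_j * a)) = 0 := by linarith
    rcases mul_eq_zero.mp h'' with h | h
    · exact absurd h h3
    rcases mul_eq_zero.mp h with h | h
    · linarith
    rcases mul_eq_zero.mp h with h | h
    · linarith
    · exact h
  have hane : a ≠ 0 := by
    intro h0
    have hc0 := hazc h0
    have hA2 := hzero A h0 hA0 hApi
    have hC2' := hzero C hc0 hC0 hCpi
    have : B = 0 := by rw [hA2, hC2'] at hsum; linarith
    exact hBne this
  have hcne : c ≠ 0 := fun h0 => hane (hcza h0)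
  have hbne : b ≠ 0 := fun h0 => hane (hbza h0)
  -- sign lemmas : w * (product of cosines) < 0
  have hP : (0:ℝ) < dist p_i p_k * dist p_i p_k * dist p_i p_j * dist p_j p_k :=
    by positivity
  have hQ : (0:ℝ) < dist p_i p_k * dist p_i p_j * dist p_i p_j * dist p_j p_k :=
    by positivity
  have hR : (0:ℝ) < dist p_j p_k * dist p_j p_k * dist p_i p_j * dist p_i p_k :=
    by positivity
  have hs1 : w_ki * w_ik * (a * c) < 0 := by
    set t := w_ik * dist p_i p_k * dist p_i p_j * a with hT
    set s := w_ki * dist p_i p_k * dist p_j p_k * c with hS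
    have ht : t ≠ 0 :=
      mul_ne_zero (mul_ne_zero (mul_ne_zero h1 dik.ne') dij.ne') hane
    have hts : t * s < 0 := by
      have hkey : s = -t := by linarith
      rw [hkey]
      have := mul_self_pos.mpr ht
      nlinarith
    have heq : t * s = w_ki * w_ik * (a * c) *
        (dist p_i p_k * dist p_i p_k * dist p_i p_j * dist p_j p_k) := by
      rw [hT, hS]; ring
    rw [heq] at hts
    exact aux_neg_left hts hP
  have hs2 : w_ji * w_ij * (a * b) < 0 := by
    set t := w_ij * dist p_i p_k * dist p_i p_j * a with hT
    set s := w_ji * dist p_i p_j * dist p_j p_k * b with hS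
    have ht : t ≠ 0 :=
      mul_ne_zero (mul_ne_zero (mul_ne_zero h3 dik.ne') dij.ne') hane
    have hts : t * s < 0 := by
      have hkey : s = -t := by linarith
      rw [hkey]
      have := mul_self_pos.mpr ht
      nlinarith
    have heq : t * s = w_ji * w_ij * (a * b) *
        (dist p_i p_k * dist p_i p_j * dist p_i p_j * dist p_j p_k) := by
      rw [hT, hS]; ring
    rw [heq] at hts
    exact aux_neg_left hts hQ
  have hs3 : w_kj * w_jk * (b * c) < 0 := by
    set t := w_jk * dist p_j p_k * dist p_i p_j * b with hT
    set s := w_kj * dist p_i p_k * dist p_j p_k * c with hS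
    have ht : t ≠ 0 :=
      mul_ne_zero (mul_ne_zero (mul_ne_zero h5 djk.ne') dij.ne') hbne
    have hts : t * s < 0 := by
      have hkey : s = -t := by linarith
      rw [hkey]
      have := mul_self_pos.mpr ht
      nlinarith
    have heq : t * s = w_kj * w_jk * (b * c) *
        (dist p_j p_k * dist p_j p_k * dist p_i p_j * dist p_i p_k) := by
      rw [hT, hS]; ring
    rw [heq] at hts
    exact aux_neg_left hts hR
  -- at most one of a, b, c negative
  have hobtuse : ∀ X : ℝ, Real.cos X < 0 → 0 ≤ X → X ≤ Real.pi → Real.pi / 2 < X := by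
    intro X hX h0 hp
    by_contra h
    push_neg at h
    exact absurd (Real.cos_nonneg_of_mem_Icc ⟨by linarith [Real.pi_pos], h⟩) (by linarith)
  have hnotab : ¬ (a < 0 ∧ b < 0) := by
    rintro ⟨h, h'⟩
    have := hobtuse A h hA0 hApi
    have := hobtuse B h' hB0 hBpi
    linarith
  have hnotac : ¬ (a < 0 ∧ c < 0) := by
    rintro ⟨h, h'⟩
    have := hobtuse A h hA0 hApi
    have := hobtuse C h' hC0 hCpi
    linarith
  have hnotbc : ¬ (b < 0 ∧ c < 0) := by
    rintro ⟨h, h'⟩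
    have := hobtuse B h hB0 hBpi
    have := hobtuse C h' hC0 hCpi
    linarith
  rcases hane.lt_or_gt with haneg | hapos
  · -- a < 0, b > 0, c > 0 : case (b)
    have hbpos : 0 < b := lt_of_le_of_ne (not_lt.mp fun h => hnotab ⟨haneg, h⟩) (Ne.symm hbne)
    have hcpos : 0 < c := lt_of_le_of_ne (not_lt.mp fun h => hnotac ⟨haneg, h⟩) (Ne.symm hcne)
    have e1 : 0 < w_ki * w_ik := aux_pos_left hs1 (mul_neg_of_neg_of_pos haneg hcpos)
    have e2 : 0 < w_ji * w_ij := aux_pos_left hs2 (mul_neg_of_neg_of_pos haneg hbpos)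
    have e3 : w_kj * w_jk < 0 := aux_neg_left hs3 (mul_pos hbpos hcpos)
    exact Or.inr (Or.inl ⟨fun h => by linarith [h.1], ⟨e1, e2, e3⟩,
      fun h => by linarith [h.2.2], fun h => by linarith [h.2.2]⟩)
  rcases hbne.lt_or_gt with hbneg | hbpos
  · -- b < 0, a > 0, c > 0 : case (d)
    have hcpos : 0 < c := lt_of_le_of_ne (not_lt.mp fun h => hnotbc ⟨hbneg, h⟩) (Ne.symm hcne)
    have e1 : w_ki * w_ik < 0 := aux_neg_left hs1 (mul_pos hapos hcpos)
    have e2 : 0 < w_ji * w_ij := aux_pos_left hs2 (mul_neg_of_pos_of_neg hapos hbneg)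
    have e3 : 0 < w_kj * w_jk := aux_pos_left hs3 (mul_neg_of_neg_of_pos hbneg hcpos)
    exact Or.inr (Or.inr (Or.inr ⟨fun h => by linarith [h.2.1],
      fun h => by linarith [h.1], fun h => by linarith [h.1], ⟨e2, e3, e1⟩⟩))
  rcases hcne.lt_or_gt with hcneg | hcpos
  · -- c < 0, a > 0, b > 0 : case (c)
    have e1 : 0 < w_ki * w_ik := aux_pos_left hs1 (mul_neg_of_pos_of_neg hapos hcneg)
    have e2 : w_ji * w_ij < 0 := aux_neg_left hs2 (mul_pos hapos hbpos)
    have e3 : 0 < w_kj * w_jk := aux_pos_left hs3 (mul_neg_of_pos_of_neg hbpos hcneg)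
    exact Or.inr (Or.inr (Or.inl ⟨fun h => by linarith [h.1],
      fun h => by linarith [h.2.1], ⟨e1, e3, e2⟩, fun h => by linarith [h.1]⟩))
  · -- all positive : case (a)
    have e1 : w_ki * w_ik < 0 := aux_neg_left hs1 (mul_pos hapos hcpos)
    have e2 : w_ji * w_ij < 0 := aux_neg_left hs2 (mul_pos hapos hbpos)
    have e3 : w_kj * w_jk < 0 := aux_neg_left hs3 (mul_pos hbpos hcpos)
    exact Or.inl ⟨⟨e1, e2, e3⟩, fun h => by linarith [h.1],
      fun h => by linarith [h.1], fun h => by linarith [h.1]⟩
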